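/- Let φ be α-Hölder continuous on [0,1] with α ∈ (0,1]. Then there exists C > 0 such that N(r;φ) ≤ C r^{-1/α} for all r > 0, where N(r;φ) is the number of distinct intervals I_t associated to φ and r. -/

import Mathlib

open Set Classical

/-- The "stopping set" to the left of `t`: points of `[a,t]` where `|φ|` leaves `(r/4, 2r)`. -/
def badL (φ : ℝ → ℝ) (a r t : ℝ) : Set ℝ :=
  {s ∈ Set.Icc a t | |φ s| ≤ r / 4 ∨ 2 * r ≤ |φ s|}

/-- The "stopping set" to the right of `t`. -/
def badR (φ : ℝ → ℝ) (b r t : ℝ) : Set ℝ :=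
  {s ∈ Set.Icc t b | |φ s| ≤ r / 4 ∨ 2 * r ≤ |φ s|}

/-- `a_t`: the supremum of the left stopping set, or `a` if it is empty. -/
noncomputable def leftStop (φ : ℝ → ℝ) (a r t : ℝ) : ℝ :=
  if (badL φ a r t).Nonempty then sSup (badL φ a r t) else a

/-- `b_t`: the infimum of the right stopping set, or `b` if it is empty. -/
noncomputable def rightStop (φ : ℝ → ℝ) (b r t : ℝ) : ℝ :=
  if (badR φ b r t).Nonempty then sInf (badR φ b r t) else b

/-- The interval `I_t = (a_t, b_t)`, closed at an endpoint when that endpoint equals `a`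
(resp. `b`). -/
noncomputable def It (φ : ℝ → ℝ) (a b r t : ℝ) : Set ℝ :=
  {s : ℝ |
    (if leftStop φ a r t = a then leftStop φ a r t ≤ s else leftStop φ a r t < s) ∧
    (if rightStop φ b r t = b then s ≤ rightStop φ b r t else s < rightStop φ b r t)}

/-- `E_r = {t ∈ [a,b] : r/2 ≤ |φ(t)| ≤ r}`. -/
def Er (φ : ℝ → ℝ) (a b r : ℝ) : Set ℝ :=
  {t ∈ Set.Icc a b | r / 2 ≤ |φ t| ∧ |φ t| ≤ r}

/-- `N(r; φ)`: the number of distinct intervals `I_t`, `t ∈ E_r`. -/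
noncomputable def Ncount (φ : ℝ → ℝ) (a b r : ℝ) : ℕ :=
  (It φ a b r '' Er φ a b r).ncard

section Aux

variable {φ : ℝ → ℝ} {r : ℝ}

lemma mem_badL {a t s : ℝ} :
    s ∈ badL φ a r t ↔ s ∈ Icc a t ∧ (|φ s| ≤ r / 4 ∨ 2 * r ≤ |φ s|) := Iff.rfl

lemma mem_badR {b t s : ℝ} :
    s ∈ badR φ b r t ↔ s ∈ Icc t b ∧ (|φ s| ≤ r / 4 ∨ 2 * r ≤ |φ s|) := Iff.rfl

lemma bddAbove_badL {a t : ℝ} : BddAbove (badL φ a r t) :=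
  ⟨t, fun _ hy => hy.1.2⟩

lemma bddBelow_badR {b t : ℝ} : BddBelow (badR φ b r t) :=
  ⟨t, fun _ hy => hy.1.1⟩

lemma isClosed_badL (hc : ContinuousOn φ (Icc 0 1)) {t : ℝ} (ht : t ∈ Icc (0:ℝ) 1) :
    IsClosed (badL φ 0 r t) := by
  have h1 : ContinuousOn (fun s => |φ s|) (Icc 0 t) :=
    (hc.mono (Icc_subset_Icc_right ht.2)).abs
  have h2 : badL φ 0 r t = Icc 0 t ∩ (fun s => |φ s|) ⁻¹' (Iic (r/4) ∪ Ici (2*r)) := by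
    ext s; simp [mem_badL, and_comm]
  rw [h2]
  exact h1.preimage_isClosed_of_isClosed isClosed_Icc (isClosed_Iic.union isClosed_Ici)

lemma isClosed_badR (hc : ContinuousOn φ (Icc 0 1)) {t : ℝ} (ht : t ∈ Icc (0:ℝ) 1) :
    IsClosed (badR φ 1 r t) := by
  have h1 : ContinuousOn (fun s => |φ s|) (Icc t 1) :=
    (hc.mono (Icc_subset_Icc_left ht.1)).abs
  have h2 : badR φ 1 r t = Icc t 1 ∩ (fun s => |φ s|) ⁻¹' (Iic (r/4) ∪ Ici (2*r)) := by
    ext s; simp [mem_badR, and_comm]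
  rw [h2]
  exact h1.preimage_isClosed_of_isClosed isClosed_Icc (isClosed_Iic.union isClosed_Ici)

lemma leftStop_mem_Icc {t : ℝ} (ht : 0 ≤ t) : leftStop φ 0 r t ∈ Icc (0:ℝ) t := by
  unfold leftStop
  split_ifs with h
  · obtain ⟨x, hx⟩ := h
    exact ⟨hx.1.1.trans (le_csSup bddAbove_badL hx),
      csSup_le ⟨x, hx⟩ fun y hy => hy.1.2⟩
  · exact ⟨le_refl 0, ht⟩

lemma rightStop_mem_Icc {t : ℝ} (ht : t ≤ 1) : rightStop φ 1 r t ∈ Icc t 1 := by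
  unfold rightStop
  split_ifs with h
  · obtain ⟨x, hx⟩ := h
    exact ⟨le_csInf ⟨x, hx⟩ fun y hy => hy.1.1,
      (csInf_le bddBelow_badR hx).trans hx.1.2⟩
  · exact ⟨ht, le_refl 1⟩

lemma leftStop_mem_badL (hc : ContinuousOn φ (Icc 0 1)) {t : ℝ} (ht : t ∈ Icc (0:ℝ) 1)
    (h : (badL φ 0 r t).Nonempty) : leftStop φ 0 r t ∈ badL φ 0 r t := by
  unfold leftStop
  rw [if_pos h]
  exact (isClosed_badL hc ht).csSup_mem h bddAbove_badL

lemma rightStop_mem_badR (hc : ContinuousOn φ (Icc 0 1)) {t : ℝ} (ht : t ∈ Icc (0:ℝ) 1)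
    (h : (badR φ 1 r t).Nonempty) : rightStop φ 1 r t ∈ badR φ 1 r t := by
  unfold rightStop
  rw [if_pos h]
  exact (isClosed_badR hc ht).csInf_mem h bddBelow_badR

lemma le_leftStop {t p : ℝ} (hp : p ∈ badL φ 0 r t) : p ≤ leftStop φ 0 r t := by
  unfold leftStop
  rw [if_pos ⟨p, hp⟩]
  exact le_csSup bddAbove_badL hp

lemma rightStop_le {t p : ℝ} (hp : p ∈ badR φ 1 r t) : rightStop φ 1 r t ≤ p := by
  unfold rightStop
  rw [if_pos ⟨p, hp⟩]
  exact csInf_le bddBelow_badR hp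

lemma mem_Er_iff {t : ℝ} : t ∈ Er φ 0 1 r ↔ t ∈ Icc (0:ℝ) 1 ∧ r / 2 ≤ |φ t| ∧ |φ t| ≤ r :=
  Iff.rfl

lemma not_bad_of_mem_Er (hr : 0 < r) {t : ℝ} (ht : t ∈ Er φ 0 1 r) :
    ¬(|φ t| ≤ r / 4 ∨ 2 * r ≤ |φ t|) := by
  obtain ⟨_, h1, h2⟩ := ht
  push_neg
  constructor <;> linarith

end Aux

section Aux2

variable {φ : ℝ → ℝ} {r : ℝ}

lemma leftStop_lt_of_mem_Er (hr : 0 < r) (hc : ContinuousOn φ (Icc 0 1)) {t : ℝ}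
    (ht : t ∈ Er φ 0 1 r) (h : (badL φ 0 r t).Nonempty) : leftStop φ 0 r t < t := by
  have h1 := leftStop_mem_badL hc ht.1 h
  rcases lt_or_eq_of_le h1.1.2 with h2 | h2
  · exact h2
  · exact absurd (h2 ▸ h1.2) (not_bad_of_mem_Er hr ht)

lemma lt_rightStop_of_mem_Er (hr : 0 < r) (hc : ContinuousOn φ (Icc 0 1)) {t : ℝ}
    (ht : t ∈ Er φ 0 1 r) (h : (badR φ 1 r t).Nonempty) : t < rightStop φ 1 r t := by
  have h1 := rightStop_mem_badR hc ht.1 h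
  rcases lt_or_eq_of_le h1.1.1 with h2 | h2
  · exact h2
  · exact absurd (h2 ▸ h1.2) (not_bad_of_mem_Er hr ht)

lemma mem_It_self (hr : 0 < r) (hc : ContinuousOn φ (Icc 0 1)) {t : ℝ}
    (ht : t ∈ Er φ 0 1 r) : t ∈ It φ 0 1 r t := by
  constructor
  · split_ifs with h
    · rw [h]; exact ht.1.1
    · rcases Set.eq_empty_or_nonempty (badL φ 0 r t) with he | hne
      · exact absurd (by unfold leftStop; rw [if_neg (by simp [he])] ) h
      · exact leftStop_lt_of_mem_Er hr hc ht hne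
  · split_ifs with h
    · rw [h]; exact ht.1.2
    · rcases Set.eq_empty_or_nonempty (badR φ 1 r t) with he | hne
      · exact absurd (by unfold rightStop; rw [if_neg (by simp [he])] ) h
      · exact lt_rightStop_of_mem_Er hr hc ht hne

lemma Ioo_subset_It {t : ℝ} :
    Ioo (leftStop φ 0 r t) (rightStop φ 1 r t) ⊆ It φ 0 1 r t := by
  intro s hs
  constructor
  · split_ifs with h
    · exact hs.1.le
    · exact hs.1
  · split_ifs with h
    · exact hs.2.le
    · exact hs.2

lemma It_subset_Icc {t : ℝ} :
    It φ 0 1 r t ⊆ Icc (leftStop φ 0 r t) (rightStop φ 1 r t) := by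
  intro s hs
  obtain ⟨h1, h2⟩ := hs
  constructor
  · split_ifs at h1 with h
    · exact h1
    · exact h1.le
  · split_ifs at h2 with h
    · exact h2
    · exact h2.le

/-- If the left stops agree, the whole intervals agree. -/
lemma It_eq_of_leftStop_eq_aux (hr : 0 < r) {t u : ℝ}
    (ht : t ∈ Er φ 0 1 r) (htu : t ≤ u)
    (h : leftStop φ 0 r t = leftStop φ 0 r u) : badR φ 1 r t = badR φ 1 r u := by
  apply Set.Subset.antisymm
  · intro p hp
    rcases le_or_gt u p with h1 | h1
    · exact ⟨⟨h1, hp.1.2⟩, hp.2⟩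
    · exfalso
      have hp0 : 0 ≤ p := ht.1.1.trans hp.1.1
      have hpL : p ∈ badL φ 0 r u := ⟨⟨hp0, h1.le⟩, hp.2⟩
      have h2 : p ≤ leftStop φ 0 r u := le_leftStop hpL
      have h3 : leftStop φ 0 r t ≤ t := (leftStop_mem_Icc ht.1.1).2
      have hpt : p = t := le_antisymm (by rw [← h] at h2; linarith) hp.1.1
      exact not_bad_of_mem_Er hr ht (hpt ▸ hp.2)
  · intro p hp
    exact ⟨⟨htu.trans hp.1.1, hp.1.2⟩, hp.2⟩

lemma It_eq_of_leftStop_eq (hr : 0 < r) {t u : ℝ}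
    (ht : t ∈ Er φ 0 1 r) (hu : u ∈ Er φ 0 1 r)
    (h : leftStop φ 0 r t = leftStop φ 0 r u) : It φ 0 1 r t = It φ 0 1 r u := by
  have hbr : badR φ 1 r t = badR φ 1 r u := by
    rcases le_total t u with htu | htu
    · exact It_eq_of_leftStop_eq_aux hr ht htu h
    · exact (It_eq_of_leftStop_eq_aux hr hu htu h.symm).symm
  have hrs : rightStop φ 1 r t = rightStop φ 1 r u := by
    unfold rightStop; rw [hbr]
  unfold It
  rw [h, hrs]

/-- Core of the disjointness argument. -/
lemma It_inter_aux (hr : 0 < r) (hc : ContinuousOn φ (Icc 0 1)) {t u s : ℝ}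
    (ht : t ∈ Er φ 0 1 r) (hu : u ∈ Er φ 0 1 r)
    (hlt : leftStop φ 0 r t < leftStop φ 0 r u)
    (hs : s ∈ It φ 0 1 r t) (hsu : s ∈ It φ 0 1 r u) : False := by
  have h0t : (0:ℝ) ≤ leftStop φ 0 r t := (leftStop_mem_Icc ht.1.1).1
  have hune : leftStop φ 0 r u ≠ 0 := by linarith
  have hbne : (badL φ 0 r u).Nonempty := by
    rcases Set.eq_empty_or_nonempty (badL φ 0 r u) with he | hne
    · exact absurd (by unfold leftStop; rw [if_neg (by simp [he])]) hune
    · exact hne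
  set A := leftStop φ 0 r u with hA
  have hAbad := leftStop_mem_badL hc hu.1 hbne
  have htA : t < A := by
    by_contra hcon
    push_neg at hcon
    have : A ≤ leftStop φ 0 r t := le_leftStop ⟨⟨hAbad.1.1, hcon⟩, hAbad.2⟩
    linarith
  have hAR : A ∈ badR φ 1 r t := ⟨⟨htA.le, hAbad.1.2.trans hu.1.2⟩, hAbad.2⟩
  have h1 : rightStop φ 1 r t ≤ A := rightStop_le hAR
  have h2 : s ≤ rightStop φ 1 r t := (It_subset_Icc hs).2
  have h3 : A < s := by
    have := hsu.1
    rw [if_neg hune] at this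
    exact this
  linarith

lemma It_eq_of_inter (hr : 0 < r) (hc : ContinuousOn φ (Icc 0 1)) {t u : ℝ}
    (ht : t ∈ Er φ 0 1 r) (hu : u ∈ Er φ 0 1 r)
    (hne : (It φ 0 1 r t ∩ It φ 0 1 r u).Nonempty) : It φ 0 1 r t = It φ 0 1 r u := by
  obtain ⟨s, hst, hsu⟩ := hne
  apply It_eq_of_leftStop_eq hr ht hu
  rcases lt_trichotomy (leftStop φ 0 r t) (leftStop φ 0 r u) with h | h | h
  · exact absurd (It_inter_aux hr hc ht hu h hst hsu) not_false
  · exact h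
  · exact absurd (It_inter_aux hr hc hu ht h hsu hst) not_false

end Aux2

section Aux3

variable {φ : ℝ → ℝ} {r α K' : ℝ}

/-- Distance from a point of `E_r` to any bad point is at least `(r/(4K'))^(1/α)`. -/
lemma dist_le_of_bad (hr : 0 < r) (hα : 0 < α) (hK : 1 ≤ K')
    (hφ : ∀ s ∈ Set.Icc (0:ℝ) 1, ∀ t ∈ Set.Icc (0:ℝ) 1, |φ s - φ t| ≤ K' * |s - t| ^ α)
    {t p : ℝ} (ht : t ∈ Er φ 0 1 r) (hp : p ∈ Icc (0:ℝ) 1)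
    (hbad : |φ p| ≤ r / 4 ∨ 2 * r ≤ |φ p|) :
    (r / (4 * K')) ^ (1/α) ≤ |p - t| := by
  have hK0 : (0:ℝ) < K' := lt_of_lt_of_le one_pos hK
  have h1 : r / 4 ≤ |φ p - φ t| := by
    obtain ⟨_, hl, hu⟩ := ht
    rcases hbad with hb | hb
    · have := abs_sub_abs_le_abs_sub (φ t) (φ p)
      rw [abs_sub_comm] at this
      linarith
    · have := abs_sub_abs_le_abs_sub (φ p) (φ t)
      linarith
  have h2 : r / 4 ≤ K' * |p - t| ^ α := h1.trans (hφ p hp t ht.1)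
  have h3 : r / (4 * K') ≤ |p - t| ^ α := by
    rw [div_le_iff₀ (by positivity : (0:ℝ) < 4 * K')]
    nlinarith [h2]
  calc (r / (4 * K')) ^ (1/α) ≤ (|p - t| ^ α) ^ (1/α) :=
        Real.rpow_le_rpow (by positivity) h3 (by positivity)
    _ = |p - t| := by
        rw [← Real.rpow_mul (abs_nonneg _), mul_one_div, div_self hα.ne', Real.rpow_one]

lemma length_lower_bound (hr : 0 < r) (hα : 0 < α) (hK : 1 ≤ K')
    (hc : ContinuousOn φ (Icc 0 1))
    (hφ : ∀ s ∈ Set.Icc (0:ℝ) 1, ∀ t ∈ Set.Icc (0:ℝ) 1, |φ s - φ t| ≤ K' * |s - t| ^ α)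
    {t : ℝ} (ht : t ∈ Er φ 0 1 r) :
    min 1 ((r / (4 * K')) ^ (1/α)) ≤ rightStop φ 1 r t - leftStop φ 0 r t := by
  have hat : leftStop φ 0 r t ≤ t := (leftStop_mem_Icc ht.1.1).2
  have hbt : t ≤ rightStop φ 1 r t := (rightStop_mem_Icc ht.1.2).1
  rcases Set.eq_empty_or_nonempty (badR φ 1 r t) with heR | hneR
  · rcases Set.eq_empty_or_nonempty (badL φ 0 r t) with heL | hneL
    · have ha : leftStop φ 0 r t = 0 := by unfold leftStop; rw [if_neg (by simp [heL])]
      have hb : rightStop φ 1 r t = 1 := by unfold rightStop; rw [if_neg (by simp [heR])]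
      rw [ha, hb]
      simpa using min_le_left _ _
    · -- left stop is a bad point, right stop is 1
      have hb : rightStop φ 1 r t = 1 := by unfold rightStop; rw [if_neg (by simp [heR])]
      have hA := leftStop_mem_badL hc ht.1 hneL
      have hd := dist_le_of_bad hr hα hK hφ ht
        ⟨hA.1.1, hA.1.2.trans ht.1.2⟩ hA.2
      rw [abs_of_nonpos (by linarith)] at hd
      calc min 1 ((r / (4 * K')) ^ (1/α)) ≤ (r / (4 * K')) ^ (1/α) := min_le_right _ _
        _ ≤ t - leftStop φ 0 r t := by linarith
        _ ≤ rightStop φ 1 r t - leftStop φ 0 r t := by linarith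
  · have hB := rightStop_mem_badR hc ht.1 hneR
    have hd := dist_le_of_bad hr hα hK hφ ht
      ⟨ht.1.1.trans hB.1.1, hB.1.2⟩ hB.2
    rw [abs_of_nonneg (by linarith)] at hd
    have h0 : 0 ≤ leftStop φ 0 r t := (leftStop_mem_Icc ht.1.1).1
    calc min 1 ((r / (4 * K')) ^ (1/α)) ≤ (r / (4 * K')) ^ (1/α) := min_le_right _ _
      _ ≤ rightStop φ 1 r t - t := by linarith
      _ ≤ rightStop φ 1 r t - leftStop φ 0 r t := by linarith

lemma measurableSet_It {t : ℝ} : MeasurableSet (It φ 0 1 r t) := by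
  have h1 : It φ 0 1 r t =
      Ioo (leftStop φ 0 r t) (rightStop φ 1 r t) ∪
        (It φ 0 1 r t \ Ioo (leftStop φ 0 r t) (rightStop φ 1 r t)) :=
    (Set.union_diff_cancel Ioo_subset_It).symm
  have h2 : It φ 0 1 r t \ Ioo (leftStop φ 0 r t) (rightStop φ 1 r t) ⊆
      {leftStop φ 0 r t, rightStop φ 1 r t} := by
    rintro s ⟨hs, hs2⟩
    have h3 := It_subset_Icc hs
    rcases eq_or_lt_of_le h3.1 with h | h
    · exact Or.inl h.symm
    rcases eq_or_lt_of_le h3.2 with h' | h'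
    · exact Or.inr h'
    exact absurd ⟨h, h'⟩ hs2
  rw [h1]
  exact measurableSet_Ioo.union
    ((((Set.finite_singleton _).insert _).subset h2).measurableSet)

/-- Generic counting lemma: pairwise disjoint measurable subsets of `[0,1]`,
each of volume at least `L`, number at most `1/L`. -/
lemma ncard_le_of_disjoint (S : Set (Set ℝ)) {L : ℝ} (hL : 0 < L)
    (hmeas : ∀ A ∈ S, MeasurableSet A) (hsub : ∀ A ∈ S, A ⊆ Icc (0:ℝ) 1)
    (hvol : ∀ A ∈ S, ENNReal.ofReal L ≤ MeasureTheory.volume A)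
    (hdisj : S.Pairwise (Function.onFun Disjoint id)) :
    (S.ncard : ℝ) ≤ 1 / L := by
  have key : ∀ F : Finset (Set ℝ), ↑F ⊆ S → (F.card : ℝ) * L ≤ 1 := by
    intro F hF
    have hd : (↑F : Set (Set ℝ)).PairwiseDisjoint id := hdisj.mono hF
    have h1 : MeasureTheory.volume (⋃ A ∈ F, A) = ∑ A ∈ F, MeasureTheory.volume A := by
      simpa using MeasureTheory.measure_biUnion_finset hd fun A hA => hmeas A (hF hA)
    have h2 : (F.card : ENNReal) * ENNReal.ofReal L ≤ ∑ A ∈ F, MeasureTheory.volume A := by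
      rw [← nsmul_eq_mul]
      exact Finset.card_nsmul_le_sum F _ _ fun A hA => hvol A (hF hA)
    have h3 : MeasureTheory.volume (⋃ A ∈ F, A) ≤ 1 := by
      calc MeasureTheory.volume (⋃ A ∈ F, A) ≤ MeasureTheory.volume (Icc (0:ℝ) 1) :=
            MeasureTheory.measure_mono (Set.iUnion₂_subset fun A hA => hsub A (hF hA))
        _ = 1 := by simp [Real.volume_Icc]
    have h4 : (F.card : ENNReal) * ENNReal.ofReal L ≤ 1 := h2.trans (h1 ▸ h3)
    have h5 : ENNReal.ofReal ((F.card : ℝ) * L) ≤ ENNReal.ofReal 1 := by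
      rw [ENNReal.ofReal_mul (by positivity), ENNReal.ofReal_natCast, ENNReal.ofReal_one]
      exact h4
    exact (ENNReal.ofReal_le_ofReal_iff zero_le_one).mp h5
  have hfin : S.Finite := by
    by_contra hinf
    obtain ⟨F, hFS, hFcard⟩ := Set.Infinite.exists_subset_card_eq hinf (⌈1/L⌉₊ + 1)
    have h6 := key F hFS
    rw [hFcard] at h6
    have h7 : ((⌈1/L⌉₊ : ℝ) + 1) * L ≤ 1 := by push_cast at h6 ⊢; linarith
    have h8 : (⌈1/L⌉₊ : ℝ) + 1 ≤ 1 / L := by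
      rw [le_div_iff₀ hL]; exact h7
    have h9 : (1:ℝ)/L ≤ ⌈1/L⌉₊ := Nat.le_ceil _
    linarith
  have h10 := key hfin.toFinset (by simp)
  rw [Set.ncard_eq_toFinset_card S hfin]
  rw [le_div_iff₀ hL]
  exact h10

end Aux3

section Aux4

lemma continuousOn_of_holder {φ : ℝ → ℝ} {K' α : ℝ} (hα : 0 < α)
    (hφ : ∀ s ∈ Set.Icc (0:ℝ) 1, ∀ t ∈ Set.Icc (0:ℝ) 1, |φ s - φ t| ≤ K' * |s - t| ^ α) :
    ContinuousOn φ (Icc 0 1) := by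
  intro x hx
  have htend : Filter.Tendsto (fun s => K' * |s - x| ^ α) (nhdsWithin x (Icc 0 1)) (nhds 0) := by
    have h1 : Filter.Tendsto (fun s : ℝ => |s - x|) (nhdsWithin x (Icc 0 1)) (nhds 0) := by
      have : Filter.Tendsto (fun s : ℝ => |s - x|) (nhds x) (nhds |x - x|) := by
        exact (continuous_abs.comp (continuous_id.sub continuous_const)).tendsto x
      simpa using this.mono_left nhdsWithin_le_nhds
    have h2 : Filter.Tendsto (fun y : ℝ => K' * y ^ α) (nhds 0) (nhds 0) := by
      have h3 : ContinuousAt (fun y : ℝ => y ^ α) 0 :=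
        Real.continuousAt_rpow_const 0 α (Or.inr hα.le)
      have h4 : Filter.Tendsto (fun y : ℝ => K' * y ^ α) (nhds 0) (nhds (K' * (0:ℝ) ^ α)) :=
        (continuousAt_const.mul h3).tendsto
      rw [Real.zero_rpow hα.ne', mul_zero] at h4
      exact h4
    exact h2.comp h1
  rw [ContinuousWithinAt, tendsto_iff_dist_tendsto_zero]
  refine squeeze_zero' (Filter.Eventually.of_forall fun s => dist_nonneg) ?_ htend
  filter_upwards [self_mem_nhdsWithin] with s hs
  rw [Real.dist_eq]
  exact hφ s hs x hx

end Aux4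

theorem Ncount_le_of_holder' (α : ℝ) (hα : α ∈ Set.Ioc (0:ℝ) 1) (φ : ℝ → ℝ) (K : ℝ)
    (hφ : ∀ s ∈ Set.Icc (0:ℝ) 1, ∀ t ∈ Set.Icc (0:ℝ) 1, |φ s - φ t| ≤ K * |s - t| ^ α) :
    ∃ C : ℝ, 0 < C ∧ ∀ r : ℝ, 0 < r → (Ncount φ 0 1 r : ℝ) ≤ C * r ^ (-(1 / α)) := by
  obtain ⟨hα0, hα1⟩ := hα
  set K' : ℝ := max K 1 with hK'def
  have hK1 : 1 ≤ K' := le_max_right _ _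
  have hK0 : (0:ℝ) < K' := lt_of_lt_of_le one_pos hK1
  have hφ' : ∀ s ∈ Set.Icc (0:ℝ) 1, ∀ t ∈ Set.Icc (0:ℝ) 1,
      |φ s - φ t| ≤ K' * |s - t| ^ α := by
    intro s hs t ht
    refine (hφ s hs t ht).trans ?_
    have : (0:ℝ) ≤ |s - t| ^ α := Real.rpow_nonneg (abs_nonneg _) _
    nlinarith [le_max_left K 1]
  have hc : ContinuousOn φ (Icc 0 1) := continuousOn_of_holder hα0 hφ'
  set R₀ : ℝ := 2 * (|φ 0| + K') with hR₀def
  have hR₀pos : 0 < R₀ := by positivity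
  have hbdd : ∀ t ∈ Icc (0:ℝ) 1, |φ t| ≤ |φ 0| + K' := by
    intro t ht
    have h1 := hφ' t ht 0 (by constructor <;> norm_num)
    have h2 : |t - 0| ^ α ≤ 1 := by
      rw [sub_zero]
      exact Real.rpow_le_one (abs_nonneg _) (by rw [abs_of_nonneg ht.1]; exact ht.2) hα0.le
    have h3 : |φ t| - |φ 0| ≤ |φ t - φ 0| := abs_sub_abs_le_abs_sub _ _
    nlinarith
  refine ⟨R₀ ^ (1/α) + (4 * K') ^ (1/α), by positivity, ?_⟩
  intro r hr
  rcases le_or_gt r R₀ with hrR | hrR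
  · -- main case
    set δ : ℝ := (r / (4 * K')) ^ (1/α) with hδdef
    have hδpos : 0 < δ := Real.rpow_pos_of_pos (by positivity) _
    set L : ℝ := min 1 δ with hLdef
    have hLpos : 0 < L := lt_min one_pos hδpos
    have hcount : ((It φ 0 1 r '' Er φ 0 1 r).ncard : ℝ) ≤ 1 / L := by
      apply ncard_le_of_disjoint _ hLpos
      · rintro A ⟨t, ht, rfl⟩
        exact measurableSet_It
      · rintro A ⟨t, ht, rfl⟩
        intro s hs
        have h1 := It_subset_Icc hs
        exact ⟨(leftStop_mem_Icc ht.1.1).1.trans h1.1, h1.2.trans (rightStop_mem_Icc ht.1.2).2⟩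
      · rintro A ⟨t, ht, rfl⟩
        calc ENNReal.ofReal L
            ≤ ENNReal.ofReal (rightStop φ 1 r t - leftStop φ 0 r t) :=
              ENNReal.ofReal_le_ofReal (length_lower_bound hr hα0 hK1 hc hφ' ht)
          _ = MeasureTheory.volume (Ioo (leftStop φ 0 r t) (rightStop φ 1 r t)) := by
              rw [Real.volume_Ioo]
          _ ≤ MeasureTheory.volume (It φ 0 1 r t) :=
              MeasureTheory.measure_mono Ioo_subset_It
      · rintro A ⟨t, ht, rfl⟩ B ⟨u, hu, rfl⟩ hne
        rw [Function.onFun, id, id, Set.disjoint_iff_inter_eq_empty]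
        by_contra hcon
        exact hne (It_eq_of_inter hr hc ht hu (Set.nonempty_iff_ne_empty.mpr hcon))
    have hinv : 1 / L ≤ 1 + 1 / δ := by
      rcases min_cases 1 δ with ⟨hm, _⟩ | ⟨hm, _⟩
      · rw [hLdef, hm]; simp; positivity
      · rw [hLdef, hm]; linarith
    have hδinv : 1 / δ = (4 * K') ^ (1/α) * r ^ (-(1/α)) := by
      rw [hδdef, Real.div_rpow hr.le (by positivity), one_div_div,
        Real.rpow_neg hr.le, div_eq_mul_inv]
    have hone : 1 ≤ R₀ ^ (1/α) * r ^ (-(1/α)) := by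
      rw [Real.rpow_neg hr.le, ← div_eq_mul_inv, ← Real.div_rpow hR₀pos.le hr.le]
      calc (1:ℝ) = 1 ^ (1/α) := (Real.one_rpow _).symm
        _ ≤ (R₀ / r) ^ (1/α) :=
            Real.rpow_le_rpow zero_le_one ((one_le_div hr).mpr hrR) (by positivity)
    calc (Ncount φ 0 1 r : ℝ) ≤ 1 / L := hcount
      _ ≤ 1 + 1 / δ := hinv
      _ ≤ R₀ ^ (1/α) * r ^ (-(1/α)) + (4 * K') ^ (1/α) * r ^ (-(1/α)) := by
          rw [hδinv]; linarith
      _ = (R₀ ^ (1/α) + (4 * K') ^ (1/α)) * r ^ (-(1/α)) := by ring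
  · -- r too big: E_r is empty
    have hE : Er φ 0 1 r = ∅ := by
      ext t
      simp only [mem_Er_iff, Set.mem_empty_iff_false, iff_false]
      rintro ⟨ht, h1, h2⟩
      have := hbdd t ht
      rw [hR₀def] at hrR
      linarith
    have : Ncount φ 0 1 r = 0 := by
      unfold Ncount
      rw [hE, Set.image_empty, Set.ncard_empty]
    rw [this, Nat.cast_zero]
    positivity

/-- if `φ` is `α`-Hölder on `[0,1]` with `α ∈ (0,1]`, then
`N(r;φ) ≤ C r^{-1/α}` for all `r > 0`. -/
theorem Ncount_le_of_holder (α : ℝ) (hα : α ∈ Set.Ioc (0:ℝ) 1) (φ : ℝ → ℝ) (K : ℝ)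
    (hφ : ∀ s ∈ Set.Icc (0:ℝ) 1, ∀ t ∈ Set.Icc (0:ℝ) 1, |φ s - φ t| ≤ K * |s - t| ^ α) :
    ∃ C : ℝ, 0 < C ∧ ∀ r : ℝ, 0 < r → (Ncount φ 0 1 r : ℝ) ≤ C * r ^ (-(1 / α)) :=
  Ncount_le_of_holder' α hα φ K hφ
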